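/- (Theorem 3.1, NDL special case) For every integer n ≥ 1, every θ ∈ (0,1) and every t ∈ ℕ, the n-fold convolution of the NDL PMF satisfies ∑_{(x_1,…,x_n) ∈ ℕ^n, x_1+⋯+x_n = t} ∏_{i=1}^n (θ²/(1+θ))·(2+x_i)·(1−θ)^{x_i} = (θ²/(1+θ))^n · (∑_{k=0}^n C(n,k)·C(2n−k+t−1, t)) · (1−θ)^t. -/

import Mathlib

open scoped BigOperators

section NDLAux
open PowerSeries Finset

noncomputable def Fser : ℝ⟦X⟧ := PowerSeries.mk fun x => (2 + x : ℝ)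

lemma invOneSubPow_add' (k m : ℕ) :
    invOneSubPow ℝ (k + m) = invOneSubPow ℝ k * invOneSubPow ℝ m := by
  apply inv_injective
  apply Units.ext
  show (invOneSubPow ℝ (k + m)).inv = (invOneSubPow ℝ k * invOneSubPow ℝ m).inv
  rw [invOneSubPow_inv_eq_one_sub_pow, Units.inv_eq_val_inv, mul_inv,
    Units.val_mul, ← Units.inv_eq_val_inv, ← Units.inv_eq_val_inv,
    invOneSubPow_inv_eq_one_sub_pow, invOneSubPow_inv_eq_one_sub_pow, pow_add]

lemma one_sub_pow_mul_inv (k m : ℕ) (h : k ≤ m) :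
    (1 - X : ℝ⟦X⟧) ^ k * (invOneSubPow ℝ m).val = (invOneSubPow ℝ (m - k)).val := by
  have : invOneSubPow ℝ m = invOneSubPow ℝ k * invOneSubPow ℝ (m - k) := by
    rw [← invOneSubPow_add' k (m - k), Nat.add_sub_cancel' h]
  rw [this, Units.val_mul, ← mul_assoc, ← invOneSubPow_inv_eq_one_sub_pow, Units.inv_val, one_mul]

lemma Fser_eq : Fser = (1 + (1 - X)) * (invOneSubPow ℝ 2).val := by
  have h2 : (invOneSubPow ℝ 2).val = PowerSeries.mk fun n => ((Nat.choose (1 + n) 1 : ℕ) : ℝ) :=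
    invOneSubPow_val_succ_eq_mk_add_choose (S := ℝ) (d := 1)
  have hexp : (1 + (1 - X)) * (invOneSubPow ℝ 2).val
      = (invOneSubPow ℝ 2).val + (invOneSubPow ℝ 2).val - X * (invOneSubPow ℝ 2).val := by
    ring
  ext n
  rw [hexp]
  cases n with
  | zero => simp [Fser, h2]; norm_num
  | succ m =>
      simp only [Fser, map_sub, map_add, coeff_mk, h2, coeff_succ_X_mul,
        Nat.choose_one_right]
      push_cast
      ring

lemma coeff_pow_tuple (φ : ℝ⟦X⟧) (n t : ℕ) :
    PowerSeries.coeff (R := ℝ) t (φ ^ n)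
      = ∑ x ∈ Finset.Nat.antidiagonalTuple n t, ∏ i, PowerSeries.coeff (R := ℝ) (x i) φ := by
  have : φ ^ n = ∏ _i : Fin n, φ := by
    rw [Finset.prod_const, Finset.card_univ, Fintype.card_fin]
  rw [this, PowerSeries.coeff_prod]
  refine Finset.sum_nbij' (fun l => ⇑l) (fun x => Finsupp.equivFunOnFinite.symm x)
    ?_ ?_ ?_ ?_ ?_
  · intro l hl
    simp only [Finset.mem_finsuppAntidiag] at hl
    simp [Finset.Nat.mem_antidiagonalTuple, ← hl.1, Finset.sum_apply']
  · intro x hx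
    simp only [Finset.Nat.mem_antidiagonalTuple] at hx
    simp [Finset.mem_finsuppAntidiag, Finsupp.sum_fintype, ← hx]
  · intro l _; exact Finsupp.equivFunOnFinite.symm_apply_apply l
  · intro x _; rfl
  · intro l _; rfl

lemma invOneSubPow_pow' (n : ℕ) : (invOneSubPow ℝ 2) ^ n = invOneSubPow ℝ (2 * n) := by
  induction n with
  | zero => simp [invOneSubPow_zero]
  | succ m ih =>
      rw [pow_succ, ih, ← invOneSubPow_add', Nat.mul_succ]

lemma key_identity (n t : ℕ) (hn : 1 ≤ n) :
    ∑ x ∈ Finset.Nat.antidiagonalTuple n t, ∏ i, (2 + (x i : ℝ)) =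
      ∑ k ∈ Finset.range (n + 1),
        (Nat.choose n k : ℝ) * (Nat.choose (2 * n - k + t - 1) t : ℝ) := by
  have hL : ∑ x ∈ Finset.Nat.antidiagonalTuple n t, ∏ i, (2 + (x i : ℝ))
      = PowerSeries.coeff (R := ℝ) t (Fser ^ n) := by
    rw [coeff_pow_tuple]
    simp [Fser]
  have hpow : ((invOneSubPow ℝ 2).val) ^ n = (invOneSubPow ℝ (2 * n)).val := by
    rw [← Units.val_pow_eq_pow_val, invOneSubPow_pow']
  rw [hL, Fser_eq, mul_pow, add_comm (1 : ℝ⟦X⟧) (1 - X), add_pow, hpow,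
    Finset.sum_mul, map_sum]
  refine Finset.sum_congr rfl fun k hk => ?_
  rw [Finset.mem_range, Nat.lt_succ_iff] at hk
  rw [one_pow, mul_one, mul_comm ((1 - X : ℝ⟦X⟧) ^ k), mul_assoc,
    one_sub_pow_mul_inv k (2 * n) (by omega), ← nsmul_eq_mul, map_nsmul,
    invOneSubPow_val_eq_mk_sub_one_add_choose_of_pos _ _ (by omega), coeff_mk]
  have e1 : 2 * n - k - 1 + t = 2 * n - k + t - 1 := by omega
  have e2 : 2 * n - k - 1 = 2 * n - k + t - 1 - t := by omega
  rw [e1, e2, Nat.choose_symm (by omega), nsmul_eq_mul]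

end NDLAux

/-- Theorem 3.1, NDL special case: For every integer `n ≥ 1`, every
`θ ∈ (0,1)` and every `t ∈ ℕ`, the `n`-fold convolution of the NDL PMF satisfies
`∑_{x₁+⋯+x_n=t} ∏_{i=1}^n (θ²/(1+θ))(2+x_i)(1−θ)^{x_i}
   = (θ²/(1+θ))^n (∑_{k=0}^n C(n,k) C(2n−k+t−1, t)) (1−θ)^t`. -/
theorem ndl_sum_pmf (n : ℕ) (hn : 1 ≤ n) (θ : ℝ) (hθ : θ ∈ Set.Ioo (0 : ℝ) 1) (t : ℕ) :
    ∑ x ∈ Finset.Nat.antidiagonalTuple n t,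
        ∏ i, θ ^ 2 / (1 + θ) * (2 + (x i : ℝ)) * (1 - θ) ^ (x i) =
      (θ ^ 2 / (1 + θ)) ^ n *
        (∑ k ∈ Finset.range (n + 1),
          (Nat.choose n k : ℝ) * (Nat.choose (2 * n - k + t - 1) t : ℝ)) *
        (1 - θ) ^ t := by
  have hc : ∀ x ∈ Finset.Nat.antidiagonalTuple n t,
      ∏ i, θ ^ 2 / (1 + θ) * (2 + (x i : ℝ)) * (1 - θ) ^ (x i)
        = (θ ^ 2 / (1 + θ)) ^ n * (1 - θ) ^ t * ∏ i, (2 + (x i : ℝ)) := by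
    intro x hx
    rw [Finset.Nat.mem_antidiagonalTuple] at hx
    rw [Finset.prod_mul_distrib, Finset.prod_mul_distrib, Finset.prod_const,
      Finset.card_univ, Fintype.card_fin, Finset.prod_pow_eq_pow_sum, hx]
    ring
  rw [Finset.sum_congr rfl hc, ← Finset.mul_sum, key_identity n t hn]
  ring
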